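/- For a k-dimensional F_{q^m}-linear code C in (F_{q^m})^n with minimum rank distance d, and for any 1 ≤ i ≤ n, the first lattice-rank weight satisfies ℓ_1^{(i)}(C) = ⌈d/i⌉. -/

import Mathlib

open Submodule

/-- The rank of a vector `v ∈ L^n`: the `Fq`-dimension of the `Fq`-span of its entries. -/
noncomputable def rkVec (Fq : Type*) {L : Type*} [Field Fq] [Field L] [Algebra Fq L]
    {n : ℕ} (v : Fin n → L) : ℕ :=
  Module.finrank Fq ↥(Submodule.span Fq (Set.range v))

/-- The rank-metric lattice `L_i(n,m;q)`: subspaces of `L^n` spanned by their vectors of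
rank at most `i`. -/
def RML (Fq L : Type*) [Field Fq] [Field L] [Algebra Fq L] (n i : ℕ) :
    Set (Submodule L (Fin n → L)) :=
  {X | X = Submodule.span L {x | x ∈ X ∧ rkVec Fq x ≤ i}}

/-- The meet in the rank-metric lattice: span of the rank-`≤ i` vectors of the intersection. -/
def rmlMeet (Fq : Type*) {L : Type*} [Field Fq] [Field L] [Algebra Fq L] {n : ℕ} (i : ℕ)
    (X Y : Submodule L (Fin n → L)) : Submodule L (Fin n → L) :=
  Submodule.span L {x | x ∈ X ⊓ Y ∧ rkVec Fq x ≤ i}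

/-- `X` is a modular element of the rank-metric lattice `L_i`. -/
def IsModularElt (Fq : Type*) {L : Type*} [Field Fq] [Field L] [Algebra Fq L] {n : ℕ} (i : ℕ)
    (X : Submodule L (Fin n → L)) : Prop :=
  ∀ Y ∈ RML Fq L n i,
    Module.finrank L ↥(rmlMeet Fq i X Y) + Module.finrank L ↥(X ⊔ Y)
      = Module.finrank L ↥X + Module.finrank L ↥Y

/-- The `(i,j)`-th lattice-rank weight of a code `C ≤ L^n`. -/
noncomputable def latticeRankWeight (Fq L : Type*) [Field Fq] [Field L] [Algebra Fq L]
    (n i j : ℕ) (C : Submodule L (Fin n → L)) : ℕ :=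
  sInf {u | ∃ X ∈ RML Fq L n i, Module.finrank L ↥X = u ∧ j ≤ Module.finrank L ↥(C ⊓ X)}

section aux
variable (Fq : Type*) {L : Type*} [Field Fq] [Field L] [Algebra Fq L] {n : ℕ}
variable [FiniteDimensional Fq L]

lemma rkVec_smul_le (c : L) (x : Fin n → L) : rkVec Fq (c • x) ≤ rkVec Fq x := by
  have h : span Fq (Set.range (c • x)) ≤ (span Fq (Set.range x)).map (LinearMap.mulLeft Fq c) := by
    rw [span_le]
    rintro _ ⟨j, rfl⟩
    exact ⟨x j, subset_span (Set.mem_range_self j), rfl⟩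
  calc rkVec Fq (c • x) ≤ Module.finrank Fq ↥((span Fq (Set.range x)).map (LinearMap.mulLeft Fq c)) :=
        Submodule.finrank_mono h
    _ ≤ rkVec Fq x := Submodule.finrank_map_le _ _

lemma rkVec_add_le (x y : Fin n → L) : rkVec Fq (x + y) ≤ rkVec Fq x + rkVec Fq y := by
  have h : span Fq (Set.range (x + y)) ≤ span Fq (Set.range x) ⊔ span Fq (Set.range y) := by
    rw [span_le]
    rintro _ ⟨j, rfl⟩
    exact add_mem (le_sup_left (α := Submodule Fq L) (subset_span (Set.mem_range_self j)))
      (le_sup_right (α := Submodule Fq L) (subset_span (Set.mem_range_self j)))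
  calc rkVec Fq (x + y) ≤ Module.finrank Fq ↥(span Fq (Set.range x) ⊔ span Fq (Set.range y)) :=
        Submodule.finrank_mono h
    _ ≤ rkVec Fq x + rkVec Fq y := by
        have := Submodule.finrank_sup_add_finrank_inf_eq (span Fq (Set.range x)) (span Fq (Set.range y))
        unfold rkVec
        omega

lemma rkVec_sum_le {ι : Type*} (s : Finset ι) (f : ι → Fin n → L) :
    rkVec Fq (∑ t ∈ s, f t) ≤ ∑ t ∈ s, rkVec Fq (f t) := by
  classical
  induction s using Finset.induction with
  | empty =>
      rw [Finset.sum_empty, Finset.sum_empty]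
      have hb : span Fq (Set.range (0 : Fin n → L)) = ⊥ := by
        rw [span_eq_bot]; rintro _ ⟨j, rfl⟩; rfl
      simp [rkVec, hb]
  | insert _ _ h ih =>
      rw [Finset.sum_insert h, Finset.sum_insert h]
      exact (rkVec_add_le Fq _ _).trans (by gcongr)

lemma rkVec_zero_iff (x : Fin n → L) : rkVec Fq x = 0 ↔ x = 0 := by
  rw [rkVec, finrank_eq_zero, span_eq_bot]
  constructor
  · intro h; funext j; exact h _ (Set.mem_range_self j)
  · rintro rfl _ ⟨j, rfl⟩; rfl

/-- Any vector in a member `X` of the rank-metric lattice has rank at most `dim X * i`. -/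
lemma rkVec_le_of_mem_RML {i : ℕ} {X : Submodule L (Fin n → L)} (hX : X ∈ RML Fq L n i)
    {v : Fin n → L} (hv : v ∈ X) : rkVec Fq v ≤ Module.finrank L ↥X * i := by
  classical
  set S : Set (Fin n → L) := {x | x ∈ X ∧ rkVec Fq x ≤ i} with hS
  obtain ⟨b, hbS, hbspan, hbli⟩ := exists_linearIndependent L S
  have hfin : b.Finite := hbli.setFinite
  haveI := hfin.fintype
  have hXb : X = span L b := by rw [hbspan]; exact hX
  have hcard : Module.finrank L ↥X = b.toFinset.card := by
    rw [hXb]; exact finrank_span_set_eq_card hbli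
  rw [hXb] at hv
  obtain ⟨cf, hcsupp, hcsum⟩ := mem_span_set.mp hv
  have hsupp : cf.support ⊆ b.toFinset := fun x hx => Set.mem_toFinset.mpr (hcsupp hx)
  calc rkVec Fq v = rkVec Fq (∑ x ∈ cf.support, cf x • x) := by rw [← hcsum]; rfl
    _ ≤ ∑ x ∈ cf.support, rkVec Fq (cf x • x) := rkVec_sum_le Fq _ _
    _ ≤ ∑ _x ∈ cf.support, i := by
        refine Finset.sum_le_sum fun x hx => ?_
        exact (rkVec_smul_le Fq _ _).trans (hbS (hcsupp hx)).2
    _ = cf.support.card * i := by rw [Finset.sum_const, smul_eq_mul]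
    _ ≤ Module.finrank L ↥X * i := by
        rw [hcard]
        exact Nat.mul_le_mul_right i (Finset.card_le_card hsupp)

end aux

theorem latticeRankWeight_one_eq_ceil_div (q m n k d : ℕ) (hq : IsPrimePow q)
    (hn : 2 ≤ n) (hm : 2 ≤ m)
    (Fq L : Type) [Field Fq] [Field L] [Algebra Fq L] [Fintype Fq]
    (hcard : Fintype.card Fq = q) (hdim : Module.finrank Fq L = m)
    (C : Submodule L (Fin n → L)) (hk : Module.finrank L ↥C = k) (hk1 : 1 ≤ k)
    (i : ℕ) (hi : 1 ≤ i) (hin : i ≤ n)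
    (hd : IsLeast {r | ∃ v ∈ C, v ≠ 0 ∧ rkVec Fq v = r} d) :
    latticeRankWeight Fq L n i 1 C = (d + i - 1) / i := by
  classical
  haveI : FiniteDimensional Fq L := FiniteDimensional.of_finrank_pos (by omega)
  obtain ⟨⟨v, hvC, hv0, hvd⟩, hdlb⟩ := hd
  have hipos : 0 < i := hi
  have hd1 : 1 ≤ d := by
    rcases Nat.eq_zero_or_pos d with h0 | h
    · exact absurd ((rkVec_zero_iff Fq v).mp (h0 ▸ hvd)) hv0
    · exact h
  set c := (d + i - 1) / i with hc
  have hdci : d ≤ i * c := by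
    have h1 : i * c + (d + i - 1) % i = d + i - 1 := Nat.div_add_mod _ _
    have h2 : (d + i - 1) % i < i := Nat.mod_lt _ hipos
    omega
  -- construction of the witness X
  set W : Submodule Fq L := span Fq (Set.range v) with hWdef
  have hW : Module.finrank Fq ↥W = d := hvd
  let b : Module.Basis (Fin d) Fq ↥W := Module.finBasisOfFinrankEq Fq ↥W hW
  let vW : Fin n → ↥W := fun j => ⟨v j, subset_span (Set.mem_range_self j)⟩
  have hgrp : ∀ t : Fin d, t.val / i < c := by
    intro t
    rw [Nat.div_lt_iff_lt_mul hipos]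
    have h2 := t.2
    have h3 : i * c = c * i := Nat.mul_comm i c
    omega
  let g : Fin d → Fin c := fun t => ⟨t.val / i, hgrp t⟩
  let u : Fin c → Fin n → L := fun s j =>
    ∑ t ∈ Finset.univ.filter (fun t : Fin d => g t = s), (b.repr (vW j) t) • (b t : L)
  have hvsum : v = ∑ s : Fin c, u s := by
    funext j
    have h1 : v j = ∑ t : Fin d, (b.repr (vW j) t) • (b t : L) := by
      have h := congrArg (Subtype.val) (b.sum_repr (vW j))
      rw [Submodule.coe_sum] at h
      simpa only [Submodule.coe_smul] using h.symm
    rw [Finset.sum_apply]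
    rw [h1, ← Finset.sum_fiberwise_of_maps_to (t := Finset.univ) (g := g)
      (fun t _ => Finset.mem_univ (g t)) (fun t => (b.repr (vW j) t) • (b t : L))]
  set X : Submodule L (Fin n → L) := span L (Set.range u) with hXdef
  have hcardgrp : ∀ s : Fin c, (Finset.univ.filter (fun t : Fin d => g t = s)).card ≤ i := by
    intro s
    have : (Finset.univ.filter (fun t : Fin d => g t = s)).card ≤ (Finset.range i).card :=
      Finset.card_le_card_of_injOn (fun t => t.val % i)
        (fun t _ => Finset.mem_range.mpr (Nat.mod_lt _ hipos))
        (by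
          intro t1 h1 t2 h2 hmod
          simp only [Finset.coe_filter, Set.mem_setOf_eq, Finset.mem_univ, true_and] at h1 h2
          have e1 := congrArg Fin.val h1
          have e2 := congrArg Fin.val h2
          simp only [g] at e1 e2
          have hdiv : t1.val / i = t2.val / i := e1.trans e2.symm
          have hmod' : t1.val % i = t2.val % i := hmod
          have f1 := Nat.div_add_mod t1.val i
          have f2 := Nat.div_add_mod t2.val i
          rw [hdiv] at f1
          exact Fin.ext (by omega))
    simpa using this
  have hrku : ∀ s : Fin c, rkVec Fq (u s) ≤ i := by
    intro s
    set fs : Finset L := (Finset.univ.filter (fun t : Fin d => g t = s)).image (fun t => (b t : L))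
      with hfs
    have hsub : span Fq (Set.range (u s)) ≤ span Fq (fs : Set L) := by
      rw [span_le]
      rintro _ ⟨j, rfl⟩
      refine sum_mem fun t ht => smul_mem _ _ (subset_span ?_)
      exact Finset.mem_coe.mpr (Finset.mem_image_of_mem _ ht)
    calc rkVec Fq (u s) ≤ Module.finrank Fq ↥(span Fq (fs : Set L)) := Submodule.finrank_mono hsub
      _ ≤ fs.card := by
          have := finrank_span_le_card (R := Fq) (fs : Set L)
          simpa using this
      _ ≤ i := le_trans (Finset.card_image_le) (hcardgrp s)
  have huX : ∀ s : Fin c, u s ∈ X := fun s => subset_span (Set.mem_range_self s)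
  have hvX : v ∈ X := hvsum ▸ sum_mem fun s _ => huX s
  have hXRML : X ∈ RML Fq L n i := by
    refine le_antisymm ?_ (span_le.mpr fun x hx => hx.1)
    rw [hXdef]
    refine span_le.mpr ?_
    rintro _ ⟨s, rfl⟩
    exact subset_span ⟨huX s, hrku s⟩
  have hXle : Module.finrank L ↥X ≤ c := by
    have h1 : Module.finrank L ↥X ≤ (Set.range u).toFinset.card := by
      have := finrank_span_le_card (R := L) (Set.range u)
      simpa [hXdef] using this
    have h2 : (Set.range u).toFinset.card ≤ c := by
      rw [Set.toFinset_range]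
      exact le_trans Finset.card_image_le (by simp)
    omega
  have hCX : 1 ≤ Module.finrank L ↥(C ⊓ X) := by
    have : Nontrivial ↥(C ⊓ X) := by
      refine nontrivial_of_ne ⟨v, hvC, hvX⟩ 0 ?_
      intro h
      exact hv0 (congrArg Subtype.val h)
    exact Module.finrank_pos_iff.mpr this
  -- the sInf computation
  set S : Set ℕ := {u | ∃ X ∈ RML Fq L n i, Module.finrank L ↥X = u ∧ 1 ≤ Module.finrank L ↥(C ⊓ X)}
    with hSdef
  have hmem : Module.finrank L ↥X ∈ S := ⟨X, hXRML, rfl, hCX⟩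
  have hlb : ∀ u0 ∈ S, c ≤ u0 := by
    rintro u0 ⟨Y, hY, rfl, hCY⟩
    have : Nontrivial ↥(C ⊓ Y) := Module.finrank_pos_iff.mp hCY
    obtain ⟨⟨w, hwCY⟩, hw0⟩ := exists_ne (0 : ↥(C ⊓ Y))
    have hwne : w ≠ 0 := fun h => hw0 (Subtype.ext h)
    have hdle : d ≤ rkVec Fq w := hdlb ⟨w, hwCY.1, hwne, rfl⟩
    have hrk : rkVec Fq w ≤ Module.finrank L ↥Y * i := rkVec_le_of_mem_RML Fq hY hwCY.2
    have hdy : d ≤ Module.finrank L ↥Y * i := le_trans hdle hrk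
    -- c = (d+i-1)/i ≤ Y
    have hcomm : Module.finrank L ↥Y * i = i * Module.finrank L ↥Y := Nat.mul_comm _ _
    have hle2 : d + i - 1 ≤ i * Module.finrank L ↥Y + (i - 1) := by omega
    have hkey : (d + i - 1) / i ≤ (i * Module.finrank L ↥Y + (i - 1)) / i :=
      Nat.div_le_div_right hle2
    have h0 : (i - 1) / i = 0 := Nat.div_eq_of_lt (by omega)
    rw [Nat.mul_add_div hipos, h0] at hkey
    rw [hc]
    omega
  have h1 : sInf S ≤ c := le_trans (Nat.sInf_le hmem) hXle
  have h2 : c ≤ sInf S := hlb _ (Nat.sInf_mem ⟨_, hmem⟩)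
  have : sInf S = c := le_antisymm h1 h2
  simpa [latticeRankWeight, hSdef] using this
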